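/- Let 𝒢 be a group (under matrix multiplication) of monomial unitary matrices in Matrix S S ℂ and let ψ be the unique common +1 eigenvector of 𝒢. Fix x ∈ S, let 𝒢_x = {U ∈ 𝒢 : ∃ c ∈ ℂ, U.mulVec e_x = c • e_x} (a subgroup of 𝒢), and let T ⊆ 𝒢_x be a subset generating 𝒢_x as a group. Then the support {t ∈ S : ψ(t) ≠ 0} equals the orbit O_x if and only if V.mulVec e_x = e_x for every V ∈ T. -/

import Mathlib

/-- Let `𝒢` be a group of monomial unitary matrices with unique common `+1` eigenvector
`ψ`, fix `x : S`, let `𝒢_x` be the stabilizer subgroup of all `U ∈ 𝒢` with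
`U e_x ∝ e_x`, and let `T` be a set of generators of `𝒢_x`. Then the support of `ψ`
equals the orbit `O_x` iff `V e_x = e_x` for every `V ∈ T`. -/
theorem stmt_15 {S : Type*} [Fintype S] [DecidableEq S] [Nonempty S]
    (𝒢 : Subgroup (Matrix.unitaryGroup S ℂ))
    (hmono : ∀ U ∈ 𝒢, ∀ s : S, ∃ (c : ℂ) (t : S),
      (U : Matrix S S ℂ).mulVec (Pi.single s 1) = c • (Pi.single t 1 : S → ℂ))
    (ψ : S → ℂ) (hψ : ψ ≠ 0)
    (heig : ∀ U ∈ 𝒢, (U : Matrix S S ℂ).mulVec ψ = ψ)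
    (huniq : ∀ φ : S → ℂ, (∀ U ∈ 𝒢, (U : Matrix S S ℂ).mulVec φ = φ) →
      ∃ c : ℂ, φ = c • ψ)
    (x : S) (T : Set (Matrix.unitaryGroup S ℂ))
    -- `T` is contained in the stabilizer `𝒢_x` ...
    (hTsub : T ⊆ {U : Matrix.unitaryGroup S ℂ | U ∈ 𝒢 ∧ ∃ c : ℂ,
      (U : Matrix S S ℂ).mulVec (Pi.single x 1) = c • (Pi.single x 1 : S → ℂ)})
    -- ... and generates it as a group:
    (hTgen : {U : Matrix.unitaryGroup S ℂ | U ∈ 𝒢 ∧ ∃ c : ℂ,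
      (U : Matrix S S ℂ).mulVec (Pi.single x 1) = c • (Pi.single x 1 : S → ℂ)}
        ⊆ ↑(Subgroup.closure T)) :
    {t : S | ψ t ≠ 0} =
      {t : S | ∃ U ∈ 𝒢, ∃ c : ℂ, c ≠ 0 ∧
        (U : Matrix S S ℂ).mulVec (Pi.single x 1) = c • (Pi.single t 1 : S → ℂ)} ↔
    ∀ V ∈ T, (V : Matrix S S ℂ).mulVec (Pi.single x 1) = Pi.single x 1 := by
  classical
  set e : S → (S → ℂ) := fun s => Pi.single s 1 with he
  -- the inverse of a unitary cancels `mulVec`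
  have hcancel : ∀ (U : Matrix.unitaryGroup S ℂ) (w : S → ℂ),
      (↑(U⁻¹) : Matrix S S ℂ).mulVec ((U : Matrix S S ℂ).mulVec w) = w := by
    intro U w
    rw [Matrix.mulVec_mulVec]
    have h1 : (↑(U⁻¹) : Matrix S S ℂ) * (U : Matrix S S ℂ) = 1 := by
      rw [Matrix.UnitaryGroup.inv_val]
      exact Matrix.UnitaryGroup.star_mul_self U
    rw [h1, Matrix.one_mulVec]
  have hinj : ∀ (U : Matrix.unitaryGroup S ℂ),
      Function.Injective (U : Matrix S S ℂ).mulVec := by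
    intro U v w h
    have := congrArg (↑(U⁻¹) : Matrix S S ℂ).mulVec h
    rwa [hcancel, hcancel] at this
  -- the scalars are nonzero
  have hczero : ∀ (U : Matrix.unitaryGroup S ℂ) (s : S) (c : ℂ) (t : S),
      (U : Matrix S S ℂ).mulVec (e s) = c • e t → c ≠ 0 := by
    intro U s c t h hc
    subst hc
    rw [zero_smul] at h
    have h0 : (U : Matrix S S ℂ).mulVec 0 = 0 := Matrix.mulVec_zero _
    have := hinj U (h.trans h0.symm)
    have := congrFun this s
    simp [he] at this
  -- the target point determines the source point
  have hinjPt : ∀ (U : Matrix.unitaryGroup S ℂ) (s s' : S) (c c' : ℂ) (t : S),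
      c ≠ 0 → c' ≠ 0 → (U : Matrix S S ℂ).mulVec (e s) = c • e t →
      (U : Matrix S S ℂ).mulVec (e s') = c' • e t → s = s' := by
    intro U s s' c c' t hc hc' h h'
    have h2 : (U : Matrix S S ℂ).mulVec (c' • e s) = (U : Matrix S S ℂ).mulVec (c • e s') := by
      rw [Matrix.mulVec_smul, Matrix.mulVec_smul, h, h', smul_smul, smul_smul, mul_comm]
    have h3 := congrFun (hinj U h2) s
    by_contra hne
    simp [he, Pi.single_apply, Ne.symm hne] at h3
    exact hc' h3
  -- key evaluation: if the `s`-column of `U` is `c • e t`, then `(U v) t = c * v s`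
  have hrow : ∀ U ∈ 𝒢, ∀ (v : S → ℂ) (s : S) (c : ℂ) (t : S), c ≠ 0 →
      (U : Matrix S S ℂ).mulVec (e s) = c • e t →
      (U : Matrix S S ℂ).mulVec v t = c * v s := by
    intro U hU v s c t hc h
    have hcols : ∀ k, (U : Matrix S S ℂ) t k = if k = s then c else 0 := by
      intro k
      obtain ⟨c', t', h'⟩ := hmono U hU k
      have hc' := hczero U k c' t' h'
      have hk := congrFun h' t
      simp only [he, Matrix.mulVec_single, mul_one, Pi.smul_apply, smul_eq_mul,
        op_smul_eq_mul, Matrix.col_apply, one_mul] at hk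
      by_cases hts : t' = t
      · subst hts
        have hks : k = s := hinjPt U k s c' c t' hc' hc h' h
        subst hks
        have h4 := congrFun (h'.symm.trans h) t'
        simp only [he, Pi.smul_apply, smul_eq_mul, Pi.single_eq_same, mul_one] at h4
        rw [if_pos rfl, hk, Pi.single_eq_same, mul_one, h4]
      · have hks : k ≠ s := by
          intro hks
          subst hks
          have h4 := congrFun (h'.symm.trans h) t'
          simp only [he, Pi.smul_apply, smul_eq_mul, Pi.single_eq_same, mul_one,
            Pi.single_apply] at h4
          rw [if_neg hts, mul_zero] at h4
          exact hc' h4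
        rw [if_neg hks, hk]
        simp [he, Pi.single_apply, hts]
    show (∑ k, (U : Matrix S S ℂ) t k * v k) = c * v s
    rw [Finset.sum_eq_single s]
    · rw [hcols s, if_pos rfl]
    · intro k _ hk
      rw [hcols k, if_neg hk, zero_mul]
    · intro hs; exact absurd (Finset.mem_univ s) hs
  -- surjectivity of the induced permutation
  have hσ : ∀ U ∈ 𝒢, ∀ j : S, ∃ (s : S) (c : ℂ), c ≠ 0 ∧
      (U : Matrix S S ℂ).mulVec (e s) = c • e j := by
    intro U hU j
    choose c t ht using hmono U hU
    have hinj2 : Function.Injective t := by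
      intro a b hab
      exact hinjPt U a b (c a) (c b) (t a) (hczero U a (c a) (t a) (ht a))
        (hczero U b (c b) (t b) (ht b)) (ht a) (hab ▸ ht b)
    obtain ⟨s, hs⟩ := Finite.surjective_of_injective hinj2 j
    exact ⟨s, c s, hczero U s (c s) (t s) (ht s), hs ▸ ht s⟩
  constructor
  · -- forward direction
    intro hsupp V hV
    obtain ⟨hV𝒢, c₀, hc₀⟩ := hTsub hV
    have hc0ne : c₀ ≠ 0 := hczero V x c₀ x hc₀
    have hxOrb : x ∈ {t : S | ∃ U ∈ 𝒢, ∃ c : ℂ, c ≠ 0 ∧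
        (U : Matrix S S ℂ).mulVec (Pi.single x 1) = c • (Pi.single t 1 : S → ℂ)} :=
      ⟨1, 𝒢.one_mem, 1, one_ne_zero, by
        simp only [Matrix.UnitaryGroup.one_val, Matrix.one_mulVec, one_smul]⟩
    have hψx : ψ x ≠ 0 := by
      have := hsupp ▸ hxOrb
      exact this
    have hval := hrow V hV𝒢 ψ x c₀ x hc0ne hc₀
    rw [heig V hV𝒢] at hval
    have hone : c₀ = 1 := by
      have := mul_right_cancel₀ hψx (hval.symm.trans (one_mul (ψ x)).symm)
      exact this
    rw [hc₀, hone, one_smul]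
  · -- backward direction
    intro hT1
    -- the stabilizer fixes `e x`
    have hstab : ∀ U : Matrix.unitaryGroup S ℂ, U ∈ 𝒢 →
        (∃ c : ℂ, (U : Matrix S S ℂ).mulVec (e x) = c • e x) →
        (U : Matrix S S ℂ).mulVec (e x) = e x := by
      have hclos : ∀ W ∈ Subgroup.closure T, (↑W : Matrix S S ℂ).mulVec (e x) = e x := by
        intro W hW
        induction hW using Subgroup.closure_induction with
        | mem V hV => exact hT1 V hV
        | one => simp only [Matrix.UnitaryGroup.one_val, Matrix.one_mulVec]
        | mul a b _ _ pa pb =>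
            rw [Matrix.UnitaryGroup.mul_val, ← Matrix.mulVec_mulVec, pb, pa]
        | inv a _ pa =>
            have := congrArg (↑(a⁻¹) : Matrix S S ℂ).mulVec pa
            rw [hcancel] at this
            exact this.symm
      intro U hU hc
      exact hclos U (hTgen ⟨hU, hc⟩)
    -- well-definedness of the coefficient
    have hwd : ∀ (t : S) (U U' : Matrix.unitaryGroup S ℂ), U ∈ 𝒢 → U' ∈ 𝒢 →
        ∀ (c c' : ℂ), c ≠ 0 → c' ≠ 0 →
        (U : Matrix S S ℂ).mulVec (e x) = c • e t →
        (U' : Matrix S S ℂ).mulVec (e x) = c' • e t → c = c' := by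
      intro t U U' hU hU' c c' hc hc' h h'
      have hU't : (↑(U'⁻¹) : Matrix S S ℂ).mulVec (e t) = c'⁻¹ • e x := by
        have := congrArg (↑(U'⁻¹) : Matrix S S ℂ).mulVec h'
        rw [hcancel, Matrix.mulVec_smul] at this
        have := congrArg (fun w => (c'⁻¹ : ℂ) • w) this
        simpa [smul_smul, inv_mul_cancel₀ hc'] using this.symm
      have hW : (↑(U'⁻¹ * U) : Matrix S S ℂ).mulVec (e x) = (c * c'⁻¹) • e x := by
        rw [Matrix.UnitaryGroup.mul_val, ← Matrix.mulVec_mulVec, h,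
          Matrix.mulVec_smul, hU't, smul_smul]
      have hfix := hstab (U'⁻¹ * U) (mul_mem (inv_mem hU') hU) ⟨c * c'⁻¹, hW⟩
      have := congrFun (hW.symm.trans hfix) x
      simp [he, Pi.single_eq_same] at this
      field_simp at this
      exact this
    -- construct the common eigenvector supported on the orbit
    have hφex : ∀ t : S, ∃ a : ℂ,
        (∀ U ∈ 𝒢, ∀ c : ℂ, c ≠ 0 → (U : Matrix S S ℂ).mulVec (e x) = c • e t → a = c) ∧
        ((∃ U ∈ 𝒢, ∃ c : ℂ, c ≠ 0 ∧ (U : Matrix S S ℂ).mulVec (e x) = c • e t) → a ≠ 0) ∧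
        (¬ (∃ U ∈ 𝒢, ∃ c : ℂ, c ≠ 0 ∧ (U : Matrix S S ℂ).mulVec (e x) = c • e t) → a = 0) := by
      intro t
      by_cases ht : ∃ U ∈ 𝒢, ∃ c : ℂ, c ≠ 0 ∧ (U : Matrix S S ℂ).mulVec (e x) = c • e t
      · obtain ⟨U, hU, c, hc, hUc⟩ := ht
        refine ⟨c, ?_, fun _ => hc, fun h => absurd ⟨U, hU, c, hc, hUc⟩ h⟩
        intro U' hU' c' hc' h'
        exact hwd t U U' hU hU' c c' hc hc' hUc h'
      · exact ⟨0, fun U hU c hc h => absurd ⟨U, hU, c, hc, h⟩ ht, fun h => absurd h ht,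
          fun _ => rfl⟩
    choose φ hφ using hφex
    have hφx : φ x = 1 :=
      (hφ x).1 1 𝒢.one_mem 1 one_ne_zero (by
        simp only [Matrix.UnitaryGroup.one_val, Matrix.one_mulVec, one_smul])
    -- φ is a common eigenvector
    have hinvφ : ∀ U ∈ 𝒢, (U : Matrix S S ℂ).mulVec φ = φ := by
      intro U hU
      funext j
      obtain ⟨s, c, hc, hcol⟩ := hσ U hU j
      rw [hrow U hU φ s c j hc hcol]
      by_cases hs : ∃ V ∈ 𝒢, ∃ a : ℂ, a ≠ 0 ∧ (V : Matrix S S ℂ).mulVec (e x) = a • e s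
      · obtain ⟨V, hV, a, ha, hVa⟩ := hs
        have hφs : φ s = a := (hφ s).1 V hV a ha hVa
        have hUV : (↑(U * V) : Matrix S S ℂ).mulVec (e x) = (c * a) • e j := by
          rw [Matrix.UnitaryGroup.mul_val, ← Matrix.mulVec_mulVec, hVa,
            Matrix.mulVec_smul, hcol, smul_smul, mul_comm]
        have hφj : φ j = c * a :=
          (hφ j).1 (U * V) (mul_mem hU hV) (c * a) (mul_ne_zero hc ha) hUV
        rw [hφj, hφs]
      · have hφs : φ s = 0 := (hφ s).2.2 hs
        have hj : ¬ ∃ V ∈ 𝒢, ∃ a : ℂ, a ≠ 0 ∧ (V : Matrix S S ℂ).mulVec (e x) = a • e j := by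
          rintro ⟨V, hV, a, ha, hVa⟩
          apply hs
          have hUinv : (↑(U⁻¹) : Matrix S S ℂ).mulVec (e j) = c⁻¹ • e s := by
            have := congrArg (↑(U⁻¹) : Matrix S S ℂ).mulVec hcol
            rw [hcancel, Matrix.mulVec_smul] at this
            have := congrArg (fun w => (c⁻¹ : ℂ) • w) this
            simpa [smul_smul, inv_mul_cancel₀ hc] using this.symm
          refine ⟨U⁻¹ * V, mul_mem (inv_mem hU) hV, c⁻¹ * a,
            mul_ne_zero (inv_ne_zero hc) ha, ?_⟩
          rw [Matrix.UnitaryGroup.mul_val, ← Matrix.mulVec_mulVec, hVa,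
            Matrix.mulVec_smul, hUinv, smul_smul, mul_comm]
        rw [hφs, (hφ j).2.2 hj, mul_zero]
    obtain ⟨k, hk⟩ := huniq φ hinvφ
    have hkx : k * ψ x = 1 := by
      have := congrFun hk x
      rw [hφx] at this
      simpa using this.symm
    have hkne : k ≠ 0 := by
      intro h; rw [h, zero_mul] at hkx; exact one_ne_zero hkx.symm
    ext t
    have hφt : φ t = k * ψ t := by
      have := congrFun hk t; simpa using this
    constructor
    · intro hψt
      by_contra hOrb
      have : φ t = 0 := (hφ t).2.2 (by simpa [he] using hOrb)
      rw [hφt] at this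
      exact hψt (by simpa [hkne] using this)
    · intro hOrb
      have : φ t ≠ 0 := (hφ t).2.1 (by simpa [he] using hOrb)
      rw [hφt] at this
      intro h0
      exact this (by rw [h0, mul_zero])
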